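/- Let G be a graph with maximum degree at most d, and let k ≥ 2, s ∈ [k]. Every (k,s)-multiset (a multiset of k vertices inducing a subgraph with at most s components) can be obtained from some (k−1,s)-multiset T by adding a vertex u that is either equal to some element of T or adjacent to some element of T, provided the number of components does not decrease below the bound; consequently |S(G)^k_s| ≤ |S(G)^{k-1}_s| · (k−1) · (d+1). -/

import Mathlib

open SimpleGraph

/-- `S(G)ᵏₛ`: the set of multisets of `k` vertices of `G` whose induced subgraph has at
most `s` connected components. -/
noncomputable def KSMultisets {V : Type*} (G : SimpleGraph V) (k s : ℕ) :
    Set (Multiset V) :=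
  {m | Multiset.card m = k ∧
    Nat.card (G.induce {x | x ∈ m}).ConnectedComponent ≤ s}

lemma aux_reach_transfer {V : Type*} {G : SimpleGraph V} {S S' : Set V} {x y : ↥S}
    (p : (G.induce S).Walk x y)
    (hp : ∀ z ∈ p.support, (z : V) ∈ S') :
    ∀ (hx : (x : V) ∈ S') (hy : (y : V) ∈ S'),
      (G.induce S').Reachable ⟨x, hx⟩ ⟨y, hy⟩ := by
  induction p with
  | nil => intro hx hy; exact Reachable.refl _
  | @cons a b c h q ih =>
    intro hx hy
    have hb : (b : V) ∈ S' := hp b (by simp)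
    have hq : ∀ z ∈ q.support, (z : V) ∈ S' := fun z hz => hp z (by simp [hz])
    have hadj : (G.induce S').Adj ⟨a, hx⟩ ⟨b, hb⟩ := by
      simpa using (by simpa using h : G.Adj a b)
    exact (hadj.reachable).trans (ih hq hb hy)

lemma aux_step {W : Type*} (H : SimpleGraph W) {A v : W} (h : H.Reachable A v)
    (hd : 1 ≤ H.dist A v) :
    ∃ x, H.Adj x v ∧ H.dist A x < H.dist A v ∧ H.Reachable A x := by
  obtain ⟨p, hp⟩ := h.exists_walk_length_eq_dist
  have hne : v ≠ A := by
    rintro rfl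
    rw [h.dist_eq_zero_iff.mpr rfl] at hd; omega
  obtain ⟨x, hadj, q, hq⟩ := Walk.exists_eq_cons_of_ne hne p.reverse
  refine ⟨x, hadj.symm, ?_, ⟨q.reverse⟩⟩
  have hlen : q.length + 1 = H.dist A v := by
    have := congrArg Walk.length hq
    simpa [hp] using this.symm
  have := H.dist_le q.reverse
  rw [Walk.length_reverse] at this
  omega

lemma aux_core {V : Type*} [Fintype V] (G : SimpleGraph V) (S : Set V)
    {a b : V} (ha : a ∈ S) (hb : b ∈ S) (hab : a ≠ b)
    (hr : (G.induce S).Reachable ⟨a, ha⟩ ⟨b, hb⟩) :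
    ∃ u ∈ S, (∃ w ∈ S \ {u}, G.Adj w u) ∧
      ∀ (x y : ↥S) (hx : (x : V) ∈ S \ {u}) (hy : (y : V) ∈ S \ {u}),
        (G.induce S).Reachable x y →
          (G.induce (S \ {u})).Reachable ⟨x, hx⟩ ⟨y, hy⟩ := by
  classical
  set H := G.induce S with hH
  set A : ↥S := ⟨a, ha⟩ with hA
  set B : ↥S := ⟨b, hb⟩ with hB
  have hAB : A ≠ B := fun h => hab (congrArg Subtype.val h)
  set R : Set ↥S := {x | H.Reachable A x} with hR
  obtain ⟨u, huR, hmax⟩ := R.exists_max_image (fun x => H.dist A x) R.toFinite ⟨A, Reachable.refl _⟩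
  have hBR : B ∈ R := hr
  have hdu : 1 ≤ H.dist A u := le_trans (hr.pos_dist_of_ne hAB) (hmax B hBR)
  have huA : u ≠ A := by
    rintro rfl
    rw [(Reachable.refl _).dist_eq_zero_iff.mpr rfl] at hdu; omega
  have hau : a ∈ S \ {(u : V)} := ⟨ha, fun h => huA (Subtype.ext h.symm)⟩
  have claim : ∀ n (v : ↥S), H.Reachable A v → v ≠ u → H.dist A v ≤ n →
      ∀ (hv : (v : V) ∈ S \ {(u : V)}),
        (G.induce (S \ {(u : V)})).Reachable ⟨a, hau⟩ ⟨v, hv⟩ := by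
    intro n
    induction n with
    | zero =>
      intro v hrv hvu hd hv
      have : A = v := hrv.dist_eq_zero_iff.mp (by omega)
      subst this
      exact Reachable.refl _
    | succ n ih =>
      intro v hrv hvu hd hv
      rcases Nat.eq_zero_or_pos (H.dist A v) with h0 | hpos
      · have : A = v := hrv.dist_eq_zero_iff.mp h0
        subst this
        exact Reachable.refl _
      · obtain ⟨x, hadj, hlt, hrx⟩ := aux_step H hrv hpos
        have hxu : x ≠ u := by
          rintro rfl
          exact absurd (hmax v hrv) (by omega)
        have hxv : (x : V) ∈ S \ {(u : V)} :=
          ⟨x.2, fun h => hxu (Subtype.ext h)⟩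
        have hstep := ih x hrx hxu (by omega) hxv
        have hadj' : (G.induce (S \ {(u : V)})).Adj ⟨x, hxv⟩ ⟨v, hv⟩ := by
          simpa using (by simpa [hH] using hadj : G.Adj (x : V) (v : V))
        exact hstep.trans hadj'.reachable
  obtain ⟨x, hadj, hlt, hrx⟩ := aux_step H (huR) hdu
  have hxu : x ≠ u := fun h => by rw [h] at hlt; omega
  refine ⟨(u : V), u.2, ⟨(x : V), ⟨x.2, fun h => hxu (Subtype.ext h)⟩, by simpa [hH] using hadj⟩, ?_⟩
  intro x' y' hx' hy' hrxy
  have hx'u : x' ≠ u := fun h => hx'.2 (congrArg Subtype.val h)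
  have hy'u : y' ≠ u := fun h => hy'.2 (congrArg Subtype.val h)
  by_cases hAx : H.Reachable A x'
  · have hAy : H.Reachable A y' := hAx.trans hrxy
    have h1 := claim (H.dist A x') x' hAx hx'u le_rfl hx'
    have h2 := claim (H.dist A y') y' hAy hy'u le_rfl hy'
    exact h1.symm.trans h2
  · obtain ⟨p⟩ := hrxy
    have hup : u ∉ p.support := by
      intro hup
      have hxu' : H.Reachable x' u := ⟨p.takeUntil u hup⟩
      exact hAx (huR.trans hxu'.symm)
    have hp : ∀ z ∈ p.support, (z : V) ∈ S \ {(u : V)} := by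
      intro z hz
      exact ⟨z.2, fun h => hup (by rwa [show z = u from Subtype.ext h] at hz)⟩
    exact aux_reach_transfer p hp hx' hy'

lemma aux_finite_multisets {V : Type*} [Fintype V] (n : ℕ) :
    {m : Multiset V | Multiset.card m = n}.Finite := by
  classical
  have hsub : {m : Multiset V | Multiset.card m = n} ⊆
      Set.range (fun l : List.Vector V n => (↑l.toList : Multiset V)) := by
    intro m hm
    obtain ⟨l, rfl⟩ := Quotient.exists_rep m
    exact ⟨⟨l, by simpa using hm⟩, rfl⟩
  exact (Set.finite_range _).subset hsub

lemma aux_exists_erase {V : Type*} [Fintype V] [DecidableEq V] (G : SimpleGraph V) (k s : ℕ)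
    (hk : 2 ≤ k) (hsk : s ≤ k - 1) {m : Multiset V} (hm : m ∈ KSMultisets G k s) :
    ∃ u ∈ m, m.erase u ∈ KSMultisets G (k - 1) s ∧
      (u ∈ m.erase u ∨ ∃ w ∈ m.erase u, G.Adj w u) := by
  classical
  obtain ⟨hcard, hcomp⟩ := hm
  by_cases hdup : ∃ u, 2 ≤ m.count u
  · obtain ⟨u, hu2⟩ := hdup
    have hum : u ∈ m := by rw [← Multiset.count_pos]; omega
    have hue : u ∈ m.erase u := by
      rw [← Multiset.count_pos, Multiset.count_erase_self]; omega
    have hset : {x | x ∈ m.erase u} = {x | x ∈ m} := by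
      ext x; simp only [Set.mem_setOf_eq]
      constructor
      · exact fun h => Multiset.mem_of_mem_erase h
      · intro h
        rcases eq_or_ne x u with rfl | hne
        · exact hue
        · exact (Multiset.mem_erase_of_ne hne).2 h
    refine ⟨u, hum, ⟨?_, ?_⟩, Or.inl hue⟩
    · rw [Multiset.card_erase_of_mem hum, hcard]; exact Nat.pred_eq_sub_one
    · rw [hset]; exact hcomp
  · push_neg at hdup
    have hnodup : m.Nodup := by
      rw [Multiset.nodup_iff_count_le_one]
      intro u; have := hdup u; omega
    set S : Set V := {x | x ∈ m} with hS
    have hSeq : S = ↑m.toFinset := by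
      ext x; simp [hS]
    have hScard : Nat.card ↥S = k := by
      rw [Nat.card_coe_set_eq, hSeq, Set.ncard_coe_finset,
        Multiset.toFinset_card_of_nodup hnodup, hcard]
    set H := G.induce S with hH
    have hmk : ¬ Function.Injective (H.connectedComponentMk) := by
      intro hinj
      have := Nat.card_le_card_of_injective _ hinj
      omega
    obtain ⟨a', b', hmkeq, hne⟩ := Function.not_injective_iff.mp hmk
    have hvne : (a' : V) ≠ (b' : V) := fun h => hne (Subtype.ext h)
    have hreach : H.Reachable a' b' := (SimpleGraph.ConnectedComponent.eq).mp hmkeq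
    obtain ⟨u, huS, ⟨w, hwS, hadj⟩, pres⟩ :=
      aux_core G S a'.2 b'.2 hvne (by exact hreach)
    have hum : u ∈ m := huS
    have hset : {x | x ∈ m.erase u} = S \ {u} := by
      ext x
      simp only [Set.mem_setOf_eq, Set.mem_diff, Set.mem_singleton_iff]
      rw [hnodup.mem_erase_iff]
      exact ⟨fun h => ⟨h.2, h.1⟩, fun h => ⟨h.2, h.1⟩⟩
    have hwm : w ∈ m.erase u := by
      have : w ∈ ({x | x ∈ m.erase u} : Set V) := hset ▸ hwS
      exact this
    refine ⟨u, hum, ⟨?_, ?_⟩, Or.inr ⟨w, hwm, hadj⟩⟩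
    · rw [Multiset.card_erase_of_mem hum, hcard]; exact Nat.pred_eq_sub_one
    · rw [hset]
      have hmapsTo : Set.MapsTo (id : V → V) (S \ {u}) S := fun x hx => hx.1
      let hhom : G.induce (S \ {u}) →g G.induce S :=
        SimpleGraph.induceHom SimpleGraph.Hom.id hmapsTo
      have hinj : Function.Injective (SimpleGraph.ConnectedComponent.map hhom) := by
        intro c d
        refine SimpleGraph.ConnectedComponent.ind₂ (fun x y hxy => ?_) c d
        rw [SimpleGraph.ConnectedComponent.map_mk, SimpleGraph.ConnectedComponent.map_mk,
          SimpleGraph.ConnectedComponent.eq] at hxy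
        rw [SimpleGraph.ConnectedComponent.eq]
        exact pres (hhom x) (hhom y) (by exact x.2) (by exact y.2) hxy
      calc Nat.card (G.induce (S \ {u})).ConnectedComponent
          ≤ Nat.card H.ConnectedComponent := Nat.card_le_card_of_injective _ hinj
        _ ≤ s := hcomp

/-- Let `G` have maximum degree at most `d`, `k ≥ 2` and
`s ∈ [k-1]` (so that the number of components never needs to drop below the bound).
Every `(k,s)`-multiset arises from some `(k-1,s)`-multiset `T` by adding a vertex `u`
which is equal or adjacent to some element of `T` (i.e. lies in the closed neighborhood
of `T`); consequently `|S(G)ᵏₛ| ≤ |S(G)ᵏ⁻¹ₛ| · (k-1) · (d+1)`. -/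
theorem ksMultisets_extension_and_card_bound {V : Type*} [Fintype V]
    (G : SimpleGraph V) (d k s : ℕ)
    (hdeg : ∀ v : V, (G.neighborSet v).ncard ≤ d)
    (hk : 2 ≤ k) (hs1 : 1 ≤ s) (hsk : s ≤ k - 1) :
    (∀ m ∈ KSMultisets G k s, ∃ T ∈ KSMultisets G (k - 1) s, ∃ u : V,
        m = u ::ₘ T ∧ (u ∈ T ∨ ∃ w ∈ T, G.Adj w u)) ∧
    (KSMultisets G k s).ncard ≤ (KSMultisets G (k - 1) s).ncard * (k - 1) * (d + 1) := by
  classical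
  have part1 : ∀ m ∈ KSMultisets G k s, ∃ T ∈ KSMultisets G (k - 1) s, ∃ u : V,
      m = u ::ₘ T ∧ (u ∈ T ∨ ∃ w ∈ T, G.Adj w u) := by
    intro m hm
    obtain ⟨u, hum, hT, hcl⟩ := aux_exists_erase G k s hk hsk hm
    exact ⟨m.erase u, hT, u, (Multiset.cons_erase hum).symm, hcl⟩
  refine ⟨part1, ?_⟩
  have hAfin : (KSMultisets G (k - 1) s).Finite :=
    (aux_finite_multisets (k - 1)).subset (fun m hm => hm.1)
  have hBfin : (KSMultisets G k s).Finite :=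
    (aux_finite_multisets k).subset (fun m hm => hm.1)
  set cl : Multiset V → Finset V :=
    fun T => Finset.univ.filter (fun u => u ∈ T ∨ ∃ w ∈ T, G.Adj w u) with hcl_def
  have hclcard : ∀ T ∈ KSMultisets G (k - 1) s, (cl T).card ≤ (k - 1) * (d + 1) := by
    intro T hT
    have hsub : cl T ⊆ T.toFinset.biUnion (fun w => insert w (G.neighborFinset w)) := by
      intro u hu
      simp only [hcl_def, Finset.mem_filter] at hu
      rcases hu.2 with h | ⟨w, hw, hadj⟩
      · exact Finset.mem_biUnion.2 ⟨u, Multiset.mem_toFinset.2 h, Finset.mem_insert_self _ _⟩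
      · exact Finset.mem_biUnion.2 ⟨w, Multiset.mem_toFinset.2 hw,
          Finset.mem_insert_of_mem (by simpa using hadj)⟩
    have hnb : ∀ w : V, (insert w (G.neighborFinset w)).card ≤ d + 1 := by
      intro w
      refine (Finset.card_insert_le _ _).trans ?_
      have h1 : (G.neighborFinset w).card = (G.neighborSet w).ncard := by
        rw [SimpleGraph.neighborFinset_def, Set.ncard_eq_toFinset_card']
      have := hdeg w
      omega
    calc (cl T).card
        ≤ (T.toFinset.biUnion (fun w => insert w (G.neighborFinset w))).card :=
          Finset.card_le_card hsub
      _ ≤ ∑ w ∈ T.toFinset, (insert w (G.neighborFinset w)).card := Finset.card_biUnion_le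
      _ ≤ ∑ _w ∈ T.toFinset, (d + 1) := Finset.sum_le_sum (fun w _ => hnb w)
      _ = T.toFinset.card * (d + 1) := by rw [Finset.sum_const, smul_eq_mul]
      _ ≤ (k - 1) * (d + 1) := by
          have h2 : T.toFinset.card ≤ k - 1 := hT.1 ▸ Multiset.toFinset_card_le T
          exact Nat.mul_le_mul_right _ h2
  have hsub2 : hBfin.toFinset ⊆
      hAfin.toFinset.biUnion (fun T => (cl T).image (fun u => u ::ₘ T)) := by
    intro m hm
    rw [Set.Finite.mem_toFinset] at hm
    obtain ⟨T, hT, u, rfl, hcl'⟩ := part1 m hm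
    refine Finset.mem_biUnion.2 ⟨T, (Set.Finite.mem_toFinset _).2 hT, ?_⟩
    exact Finset.mem_image.2 ⟨u, by simp [hcl_def, hcl'], rfl⟩
  calc (KSMultisets G k s).ncard = hBfin.toFinset.card :=
        Set.ncard_eq_toFinset_card _ hBfin
    _ ≤ (hAfin.toFinset.biUnion (fun T => (cl T).image (fun u => u ::ₘ T))).card :=
        Finset.card_le_card hsub2
    _ ≤ ∑ T ∈ hAfin.toFinset, ((cl T).image (fun u => u ::ₘ T)).card :=
        Finset.card_biUnion_le
    _ ≤ ∑ T ∈ hAfin.toFinset, (k - 1) * (d + 1) :=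
        Finset.sum_le_sum (fun T hT =>
          (Finset.card_image_le).trans (hclcard T ((Set.Finite.mem_toFinset _).1 hT)))
    _ = (KSMultisets G (k - 1) s).ncard * ((k - 1) * (d + 1)) := by
        rw [Finset.sum_const, smul_eq_mul, Set.ncard_eq_toFinset_card _ hAfin]
    _ = (KSMultisets G (k - 1) s).ncard * (k - 1) * (d + 1) := by ring
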